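/- arXiv:1111.0953 — 2 statements merged into one kernel-verified Lean document; each statement's English description precedes it below -/
import Mathlib

section
/- The set of period-two points of the Fibonacci trace map f (points p with f(f(p)) = p and f(p) ≠ p), intersected with the region x ≠ 1/2, is contained in the curve {(x, x/(2x−1), x) : x ∈ ℝ, x ≠ 1/2}; conversely, every point of this curve with f(p) ≠ p satisfies f²(p) = p. -/
def traceMap : ℝ × ℝ × ℝ → ℝ × ℝ × ℝ :=
  fun p => (2 * p.1 * p.2.1 - p.2.2, p.1, p.2.1)

theorem period_two_points :
    (∀ p : ℝ × ℝ × ℝ, traceMap (traceMap p) = p → traceMap p ≠ p → p.1 ≠ 1 / 2 →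
      p.2.1 = p.1 / (2 * p.1 - 1) ∧ p.2.2 = p.1) ∧
    (∀ x : ℝ, x ≠ 1 / 2 → traceMap (x, x / (2 * x - 1), x) ≠ (x, x / (2 * x - 1), x) →
      traceMap (traceMap (x, x / (2 * x - 1), x)) = (x, x / (2 * x - 1), x)) := by
  constructor
  · rintro ⟨x, y, z⟩ h _ hx
    simp only [traceMap, Prod.mk.injEq] at h
    obtain ⟨h1, h2, h3⟩ := h
    have hne : 2 * x - 1 ≠ 0 := by
      intro h0
      apply hx
      linarith
    constructor
    · rw [eq_div_iff hne]
      nlinarith [h1, h2, h3]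
    · exact h3.symm
  · intro x hx _
    have hne : 2 * x - 1 ≠ 0 := by
      intro h0
      apply hx
      linarith
    simp only [traceMap, Prod.mk.injEq]
    have key : 2 * x * (x / (2 * x - 1)) - x = x / (2 * x - 1) := by
      field_simp
      ring
    refine ⟨?_, key, trivial⟩
    rw [key]
    linarith [key]
end

section
/- Let η < π/4, ε ∈ [0, η], and set M = 1 + (n−1)·tan(2ε). Then for any C¹ regular curve α : [0,1] → ℝⁿ with α(0) ≠ α(1) such that the tangent vector α′(t) lies in the open cone of angle ε around α′(0) for all t, the length of α is at most M times the distance ‖α(0) − α(1)‖. -/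
open scoped RealInnerProductSpace

lemma sec_le_one_add_tan_two_mul {ε : ℝ} (h0 : 0 ≤ ε) (h1 : ε < Real.pi / 4) :
    (Real.cos ε)⁻¹ ≤ 1 + Real.tan (2 * ε) := by
  have hπ := Real.pi_pos
  have hc : 0 < Real.cos ε :=
    Real.cos_pos_of_mem_Ioo ⟨by linarith, by linarith⟩
  have hs : 0 ≤ Real.sin ε :=
    Real.sin_nonneg_of_nonneg_of_le_pi h0 (by linarith)
  have hsc : 1 ≤ Real.sin ε + Real.cos ε := by
    nlinarith [Real.sin_sq_add_cos_sq ε, Real.sin_le_one ε, Real.cos_le_one ε]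
  have htan : Real.tan ε ≤ Real.tan (2 * ε) := by
    apply Real.strictMonoOn_tan.monotoneOn _ _ (by linarith)
    · exact ⟨by linarith, by linarith⟩
    · exact ⟨by linarith, by linarith⟩
  have h2 : (Real.cos ε)⁻¹ ≤ 1 + Real.tan ε := by
    rw [Real.tan_eq_sin_div_cos, inv_eq_one_div]
    have heq : 1 + Real.sin ε / Real.cos ε = (Real.sin ε + Real.cos ε) / Real.cos ε := by
      field_simp
      ring
    rw [heq]
    gcongr
  linarith

lemma cos_angle_eq_one_of_dim_one (x y : EuclideanSpace ℝ (Fin 1)) (hx : x ≠ 0) (hy : y ≠ 0)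
    (h : InnerProductGeometry.angle x y < Real.pi / 2) :
    Real.cos (InnerProductGeometry.angle x y) = 1 := by
  have hx0 : x 0 ≠ 0 := by
    intro h0
    apply hx
    ext i
    fin_cases i
    exact h0
  have hy0 : y 0 ≠ 0 := by
    intro h0
    apply hy
    ext i
    fin_cases i
    exact h0
  have hix : ⟪x, y⟫ = x 0 * y 0 := by
    simp [PiLp.inner_apply, RCLike.inner_apply]
    ring
  have hnx : ‖x‖ = |x 0| := by
    rw [EuclideanSpace.norm_eq]
    simp [Real.sqrt_sq_eq_abs]
  have hny : ‖y‖ = |y 0| := by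
    rw [EuclideanSpace.norm_eq]
    simp [Real.sqrt_sq_eq_abs]
  have hcos := InnerProductGeometry.cos_angle x y
  rw [hix, hnx, hny, ← abs_mul] at hcos
  rcases lt_or_gt_of_ne (mul_ne_zero hx0 hy0) with hneg | hpos
  · exfalso
    have hm1 : Real.cos (InnerProductGeometry.angle x y) = -1 := by
      rw [hcos, abs_of_neg hneg, div_neg, div_self hneg.ne]
    have hpos' : 0 < Real.cos (InnerProductGeometry.angle x y) :=
      Real.cos_pos_of_mem_Ioo
        ⟨by linarith [InnerProductGeometry.angle_nonneg x y, Real.pi_pos], h⟩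
    linarith
  · rw [hcos, abs_of_pos hpos, div_self hpos.ne']

open InnerProductGeometry in
theorem curve_length_bound (n : ℕ) (η ε : ℝ) (hη : η < Real.pi / 4)
    (hε : ε ∈ Set.Icc 0 η)
    (α α' : ℝ → EuclideanSpace ℝ (Fin n))
    (hderiv : ∀ t ∈ Set.Icc (0 : ℝ) 1, HasDerivAt α (α' t) t)
    (hreg : ∀ t ∈ Set.Icc (0 : ℝ) 1, α' t ≠ 0)
    (hends : α 0 ≠ α 1)
    (hcone : ∀ t ∈ Set.Icc (0 : ℝ) 1, angle (α' t) (α' 0) < ε) :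
    ∫ t in (0 : ℝ)..1, ‖α' t‖ ≤
      (1 + (n - 1 : ℝ) * Real.tan (2 * ε)) * ‖α 0 - α 1‖ := by
  have hπ := Real.pi_pos
  obtain ⟨hε0, hεη⟩ := hε
  have hεlt : ε < Real.pi / 4 := lt_of_le_of_lt hεη hη
  have h0mem : (0 : ℝ) ∈ Set.Icc (0 : ℝ) 1 := ⟨le_refl 0, zero_le_one⟩
  have hα'0 : α' 0 ≠ 0 := hreg 0 h0mem
  -- n ≥ 1
  have hn : 1 ≤ n := by
    by_contra hcon
    interval_cases n
    exact hα'0 (Subsingleton.elim _ _)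
  have hn' : (1 : ℝ) ≤ (n : ℝ) := by exact_mod_cast hn
  have htannn : 0 ≤ Real.tan (2 * ε) :=
    Real.tan_nonneg_of_nonneg_of_le_pi_div_two (by linarith) (by linarith)
  have hMnn : 0 ≤ 1 + (n - 1 : ℝ) * Real.tan (2 * ε) := by
    nlinarith
  by_cases hint : IntervalIntegrable (fun t => ‖α' t‖) MeasureTheory.volume 0 1
  · -- main case
    set u : EuclideanSpace ℝ (Fin n) := ‖α' 0‖⁻¹ • α' 0 with hu
    have h00 : ‖α' 0‖ ≠ 0 := norm_ne_zero_iff.2 hα'0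
    have hnu : ‖u‖ = 1 := by
      rw [hu, norm_smul, norm_inv, norm_norm, inv_mul_cancel₀ h00]
    have hinner : ∀ t ∈ Set.Icc (0 : ℝ) 1,
        ⟪u, α' t⟫ = Real.cos (angle (α' t) (α' 0)) * ‖α' t‖ := by
      intro t ht
      have ht0 : ‖α' t‖ ≠ 0 := norm_ne_zero_iff.2 (hreg t ht)
      rw [hu, real_inner_smul_left, real_inner_comm, cos_angle]
      field_simp
    -- choose the constant c
    obtain ⟨c, hc0, hcM, hcpt⟩ : ∃ c : ℝ, 0 < c ∧
        c⁻¹ ≤ 1 + (n - 1 : ℝ) * Real.tan (2 * ε) ∧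
        ∀ t ∈ Set.Icc (0 : ℝ) 1, c * ‖α' t‖ ≤ ⟪u, α' t⟫ := by
      rcases eq_or_lt_of_le hn with hn1 | hn2
      · -- n = 1
        refine ⟨1, one_pos, ?_, ?_⟩
        · rw [inv_one]
          nlinarith
        · intro t ht
          rw [hinner t ht, one_mul]
          have : Real.cos (angle (α' t) (α' 0)) = 1 := by
            subst hn1
            exact cos_angle_eq_one_of_dim_one _ _ (hreg t ht) hα'0
              (by have := hcone t ht; linarith)
          rw [this, one_mul]
      · -- n ≥ 2
        have hc : 0 < Real.cos ε :=
          Real.cos_pos_of_mem_Ioo ⟨by linarith, by linarith⟩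
        refine ⟨Real.cos ε, hc, ?_, ?_⟩
        · have h1 := sec_le_one_add_tan_two_mul hε0 hεlt
          have hn2' : (2 : ℝ) ≤ (n : ℝ) := by exact_mod_cast hn2
          nlinarith
        · intro t ht
          rw [hinner t ht]
          have hcc : Real.cos ε ≤ Real.cos (angle (α' t) (α' 0)) :=
            Real.cos_le_cos_of_nonneg_of_le_pi (angle_nonneg _ _)
              (by linarith) (le_of_lt (hcone t ht))
          exact mul_le_mul_of_nonneg_right hcc (norm_nonneg _)
    -- inner function is interval integrable
    have hint' : IntervalIntegrable (fun t => ⟪u, α' t⟫) MeasureTheory.volume 0 1 := by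
      apply hint.mono_fun
      · have hmeas : Measurable (fun t : ℝ => ⟪u, deriv α t⟫) :=
          ((innerSL ℝ u).continuous.measurable).comp (measurable_deriv α)
        apply (hmeas.aestronglyMeasurable).congr
        apply (MeasureTheory.ae_restrict_iff' measurableSet_uIoc).2
        filter_upwards with t ht
        have ht' : t ∈ Set.Icc (0 : ℝ) 1 := by
          rw [Set.uIoc_of_le zero_le_one] at ht
          exact Set.Ioc_subset_Icc_self ht
        rw [(hderiv t ht').deriv]
      · filter_upwards with t
        calc ‖⟪u, α' t⟫‖ ≤ ‖u‖ * ‖α' t‖ := by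
              rw [Real.norm_eq_abs]; exact abs_real_inner_le_norm _ _
          _ = ‖‖α' t‖‖ := by rw [hnu, one_mul, norm_norm]
    -- FTC
    have hftc : ∫ t in (0:ℝ)..1, ⟪u, α' t⟫ = ⟪u, α 1⟫ - ⟪u, α 0⟫ := by
      apply intervalIntegral.integral_eq_sub_of_hasDerivAt
        (f := fun s => (⟪u, α s⟫ : ℝ)) _ hint'
      intro t ht
      rw [Set.uIcc_of_le zero_le_one] at ht
      exact (innerSL ℝ u).hasFDerivAt.comp_hasDerivAt t (hderiv t ht)
    have hD : ∫ t in (0:ℝ)..1, ⟪u, α' t⟫ ≤ ‖α 0 - α 1‖ := by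
      rw [hftc, ← inner_sub_right]
      calc ⟪u, α 1 - α 0⟫ ≤ ‖u‖ * ‖α 1 - α 0‖ := real_inner_le_norm _ _
        _ = ‖α 0 - α 1‖ := by rw [hnu, one_mul, norm_sub_rev]
    have hmono : ∫ t in (0:ℝ)..1, c * ‖α' t‖ ≤ ∫ t in (0:ℝ)..1, ⟪u, α' t⟫ :=
      intervalIntegral.integral_mono_on zero_le_one (hint.const_mul c) hint' hcpt
    rw [intervalIntegral.integral_const_mul] at hmono
    have hI : c * ∫ t in (0:ℝ)..1, ‖α' t‖ ≤ ‖α 0 - α 1‖ := le_trans hmono hD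
    have hfinal : ∫ t in (0:ℝ)..1, ‖α' t‖ ≤ c⁻¹ * ‖α 0 - α 1‖ := by
      rw [← mul_le_mul_iff_right₀ hc0, ← mul_assoc, mul_inv_cancel₀ hc0.ne', one_mul]
      exact hI
    calc ∫ t in (0:ℝ)..1, ‖α' t‖ ≤ c⁻¹ * ‖α 0 - α 1‖ := hfinal
      _ ≤ (1 + (n - 1 : ℝ) * Real.tan (2 * ε)) * ‖α 0 - α 1‖ :=
        mul_le_mul_of_nonneg_right hcM (norm_nonneg _)
  · rw [intervalIntegral.integral_undef hint]
    exact mul_nonneg hMnn (norm_nonneg _)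
end
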